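/- An undirected k-circulant graph on n vertices (with n > 2k) is 2k-vertex-connected. -/

import Mathlib

/-- The vertex connectivity of `G`: the least size of a vertex set whose removal
disconnects the graph or leaves fewer than 2 vertices. -/
noncomputable def vConn {V : Type*} (G : SimpleGraph V) : ℕ :=
  sInf {k | ∃ S : Set V, S.ncard = k ∧ (¬ (G.induce Sᶜ).Connected ∨ Sᶜ.ncard ≤ 1)}

/-- The undirected k-circulant graph on `ZMod n`: x and y are adjacent iff their
difference (in either direction) is between 1 and k mod n. -/
def circulantGraph' (n k : ℕ) : SimpleGraph (ZMod n) :=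
  SimpleGraph.fromRel (fun x y => 1 ≤ (y - x).val ∧ (y - x).val ≤ k)

open Classical in
/-- If fewer than `k` vertices are deleted strictly inside the arc from `x` to `x + d`,
then `x` and `x + d` are reachable in the induced graph. -/
lemma circ_reach_aux (n k : ℕ) [NeZero n] (hk : 0 < k) (S : Set (ZMod n)) :
    ∀ d : ℕ, ∀ x : ZMod n, d < n → ∀ (hx : x ∉ S) (hxd : (x + (d : ZMod n)) ∉ S),
    ((Finset.Ioo 0 d).filter (fun i : ℕ => x + (i : ZMod n) ∈ S)).card < k →
    ((circulantGraph' n k).induce Sᶜ).Reachable ⟨x, hx⟩ ⟨x + (d : ZMod n), hxd⟩ := by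
  intro d
  induction d using Nat.strong_induction_on with
  | _ d ih =>
    intro x hdn hx hxd hcard
    rcases Nat.eq_zero_or_pos d with h0 | hpos
    · subst h0
      have : (⟨x + ((0:ℕ) : ZMod n), hxd⟩ : ↥Sᶜ) = ⟨x, hx⟩ := by
        apply Subtype.ext; push_cast; ring
      rw [this]
    · have hadj : ∀ j : ℕ, 0 < j → j ≤ k → j < n → (circulantGraph' n k).Adj x (x + (j : ZMod n)) := by
        intro j hj0 hjk hjn
        have hval : ((x + (j : ZMod n)) - x).val = j := by
          have : (x + (j : ZMod n)) - x = (j : ZMod n) := by ring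
          rw [this, ZMod.val_cast_of_lt hjn]
        have hne : x ≠ x + (j : ZMod n) := by
          intro h
          have : ((x + (j : ZMod n)) - x).val = 0 := by rw [← h]; simp
          omega
        rw [circulantGraph', SimpleGraph.fromRel_adj]
        exact ⟨hne, Or.inl ⟨by omega, by omega⟩⟩
      by_cases hdk : d ≤ k
      · have : ((circulantGraph' n k).induce Sᶜ).Adj ⟨x, hx⟩ ⟨x + (d : ZMod n), hxd⟩ :=
          hadj d hpos hdk hdn
        exact this.reachable
      · push_neg at hdk
        -- find a live vertex x + j with 1 ≤ j ≤ k
        have hex : ∃ j : ℕ, 0 < j ∧ j ≤ k ∧ x + (j : ZMod n) ∉ S := by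
          by_contra hall
          push_neg at hall
          have hsub : Finset.Icc 1 k ⊆ (Finset.Ioo 0 d).filter (fun i : ℕ => x + (i : ZMod n) ∈ S) := by
            intro i hi
            simp only [Finset.mem_Icc] at hi
            simp only [Finset.mem_filter, Finset.mem_Ioo]
            exact ⟨⟨by omega, by omega⟩, hall i (by omega) hi.2⟩
          have := Finset.card_le_card hsub
          simp only [Nat.card_Icc] at this
          omega
        obtain ⟨j, hj0, hjk, hjS⟩ := hex
        have hjn : j < n := by omega
        have hstep : ((circulantGraph' n k).induce Sᶜ).Adj ⟨x, hx⟩ ⟨x + (j : ZMod n), hjS⟩ :=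
          hadj j hj0 hjk hjn
        have hend : (x + (j : ZMod n)) + ((d - j : ℕ) : ZMod n) = x + (d : ZMod n) := by
          have : ((d - j : ℕ) : ZMod n) = (d : ZMod n) - (j : ZMod n) := by
            push_cast [Nat.cast_sub (by omega : j ≤ d)]; ring
          rw [this]; ring
        have hxd' : (x + (j : ZMod n)) + ((d - j : ℕ) : ZMod n) ∉ S := by rw [hend]; exact hxd
        have hcard' : ((Finset.Ioo 0 (d - j)).filter
            (fun i : ℕ => (x + (j : ZMod n)) + (i : ZMod n) ∈ S)).card < k := by
          refine lt_of_le_of_lt ?_ hcard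
          apply Finset.card_le_card_of_injOn (fun i => i + j)
          · intro i hi
            simp only [Finset.mem_coe, Finset.mem_filter, Finset.mem_Ioo] at hi
            simp only [Finset.mem_coe, Finset.mem_filter, Finset.mem_Ioo]
            refine ⟨⟨by omega, by omega⟩, ?_⟩
            have : x + ((i + j : ℕ) : ZMod n) = (x + (j : ZMod n)) + (i : ZMod n) := by
              push_cast; ring
            rw [this]; exact hi.2
          · intro a _ b _ h
            have h' : a + j = b + j := h
            omega
        have hrec := ih (d - j) (by omega) (x + (j : ZMod n)) (by omega) hjS hxd' hcard'
        have heq : (⟨(x + (j : ZMod n)) + ((d - j : ℕ) : ZMod n), hxd'⟩ : ↥Sᶜ)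
            = ⟨x + (d : ZMod n), hxd⟩ := Subtype.ext hend
        rw [heq] at hrec
        exact hstep.reachable.trans hrec

open Classical in
/-- An undirected k-circulant graph on n > 2k vertices is 2k-vertex-connected. -/
theorem circulant_two_k_connected (n k : ℕ) [NeZero n] (hk : 0 < k) (hn : 2 * k < n) :
    2 * k ≤ vConn (circulantGraph' n k) := by
  apply le_csInf
  · exact ⟨(Set.univ : Set (ZMod n)).ncard, Set.univ, rfl, Or.inr (by simp)⟩
  · rintro m ⟨S, rfl, hdis⟩
    by_contra hlt
    push_neg at hlt
    have hsum : S.ncard + Sᶜ.ncard = n := by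
      rw [Set.ncard_add_ncard_compl]; simp [Nat.card_zmod]
    have hcompl : 2 ≤ Sᶜ.ncard := by omega
    rcases hdis with hnc | hle
    swap
    · omega
    apply hnc
    have hne : Nonempty ↥Sᶜ := by
      rw [Set.nonempty_coe_sort]
      exact Set.nonempty_of_ncard_ne_zero (by omega)
    rw [SimpleGraph.connected_iff]
    refine ⟨?_, hne⟩
    rintro ⟨x, hx⟩ ⟨y, hy⟩
    by_cases hxy : x = y
    · subst hxy; rfl
    · set d := (y - x).val with hd
      have hdn : d < n := ZMod.val_lt _
      have hd0 : 0 < d := by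
        rw [hd]
        exact ZMod.val_pos.mpr (sub_ne_zero.mpr (Ne.symm hxy))
      have hxdy : x + (d : ZMod n) = y := by
        rw [hd, ZMod.natCast_val, ZMod.cast_id]; ring
      have hynx : y + ((n - d : ℕ) : ZMod n) = x := by
        have : ((n - d : ℕ) : ZMod n) = -(d : ZMod n) := by
          push_cast [Nat.cast_sub (le_of_lt hdn)]; simp
        rw [this, hd, ZMod.natCast_val, ZMod.cast_id]; ring
      set A := (Finset.Ioo 0 d).filter (fun i : ℕ => x + (i : ZMod n) ∈ S) with hA
      set B := (Finset.Ioo 0 (n - d)).filter (fun i : ℕ => y + (i : ZMod n) ∈ S) with hB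
      have hinjA : Set.InjOn (fun i : ℕ => x + (i : ZMod n)) A := by
        intro a ha b hb h
        simp only [hA, Finset.coe_filter, Set.mem_setOf_eq, Finset.mem_Ioo] at ha hb
        have : (a : ZMod n) = b := by
          have := add_left_cancel h
          exact this
        have := congrArg ZMod.val this
        rwa [ZMod.val_cast_of_lt (by omega), ZMod.val_cast_of_lt (by omega)] at this
      have hinjB : Set.InjOn (fun i : ℕ => y + (i : ZMod n)) B := by
        intro a ha b hb h
        simp only [hB, Finset.coe_filter, Set.mem_setOf_eq, Finset.mem_Ioo] at ha hb
        have : (a : ZMod n) = b := add_left_cancel h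
        have := congrArg ZMod.val this
        rwa [ZMod.val_cast_of_lt (by omega), ZMod.val_cast_of_lt (by omega)] at this
      have hdisj : Disjoint (A.image (fun i : ℕ => x + (i : ZMod n)))
          (B.image (fun i : ℕ => y + (i : ZMod n))) := by
        rw [Finset.disjoint_left]
        rintro z hzA hzB
        simp only [Finset.mem_image, hA, hB, Finset.mem_filter, Finset.mem_Ioo] at hzA hzB
        obtain ⟨a, ⟨⟨ha0, had⟩, _⟩, rfl⟩ := hzA
        obtain ⟨b, ⟨⟨hb0, hbn⟩, _⟩, hb⟩ := hzB
        have : x + ((d + b : ℕ) : ZMod n) = x + (a : ZMod n) := by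
          push_cast
          rw [← add_assoc, hxdy] at *
          linear_combination hb
        have := add_left_cancel this
        have := congrArg ZMod.val this
        rw [ZMod.val_cast_of_lt (by omega), ZMod.val_cast_of_lt (by omega)] at this
        omega
      have hsubS : (A.image (fun i : ℕ => x + (i : ZMod n))) ∪
          (B.image (fun i : ℕ => y + (i : ZMod n))) ⊆ S.toFinite.toFinset := by
        intro z hz
        rw [Finset.mem_union] at hz
        rw [Set.Finite.mem_toFinset]
        rcases hz with hz | hz <;>
        · simp only [Finset.mem_image, hA, hB, Finset.mem_filter] at hz
          obtain ⟨a, ⟨_, haS⟩, rfl⟩ := hz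
          exact haS
      have hcards : A.card + B.card ≤ S.ncard := by
        have h1 : (A.image (fun i : ℕ => x + (i : ZMod n))).card = A.card :=
          Finset.card_image_of_injOn hinjA
        have h2 : (B.image (fun i : ℕ => y + (i : ZMod n))).card = B.card :=
          Finset.card_image_of_injOn hinjB
        have h3 := Finset.card_le_card hsubS
        rw [Finset.card_union_of_disjoint hdisj, h1, h2] at h3
        rw [Set.ncard_eq_toFinset_card S S.toFinite]
        exact h3
      have hAB : A.card < k ∨ B.card < k := by omega
      rcases hAB with hAk | hBk
      · have hxdS : x + ((d : ℕ) : ZMod n) ∉ S := by rw [hxdy]; exact hy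
        have h := circ_reach_aux n k hk S d x hdn hx hxdS hAk
        have heq : (⟨x + ((d : ℕ) : ZMod n), hxdS⟩ : ↥Sᶜ) = ⟨y, hy⟩ := Subtype.ext hxdy
        rw [heq] at h
        exact h
      · have hynS : y + ((n - d : ℕ) : ZMod n) ∉ S := by rw [hynx]; exact hx
        have h := circ_reach_aux n k hk S (n - d) y (by omega) hy hynS hBk
        have heq : (⟨y + ((n - d : ℕ) : ZMod n), hynS⟩ : ↥Sᶜ) = ⟨x, hx⟩ := Subtype.ext hynx
        rw [heq] at h
        exact h.symm
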